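/- Let (X,d) be a complete geodesic metric space (i.e. every pair of points x, y ∈ X can be joined by a curve in X of length d(x,y)) equipped with a Borel regular doubling measure μ with constant C_d ≥ 1, and let Ω ⊂ X be nonempty open with X∖Ω ≠ ∅. Then for any two constants 0 < c₁, c₂ < 1, one has M^{1,1}_{c₁}(Ω) = M^{1,1}_{c₂}(Ω) with equivalent norms, where the equivalence constants depend only on C_d, c₁, and c₂. -/

import Mathlib

open Metric MeasureTheory
open scoped ENNReal NNReal

/-- `g` is an admissible restricted Hajłasz gradient of `u` on `Ω` with parameter
`c_H`: `g ≥ 0`, `g ∈ L¹(Ω)`, and the Hajłasz inequality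
`|u(x) − u(y)| ≤ d(x,y)(g(x)+g(y))` holds off a `μ`-null set `A ⊆ Ω` for all points
with `d(x,y) ≤ c_H min{dist(x,X∖Ω), dist(y,X∖Ω)}`. -/
def HajlaszAdmissibleLoc {X : Type*} [MetricSpace X] [MeasurableSpace X]
    (μ : Measure X) (Ω : Set X) (cH : ℝ) (u g : X → ℝ) : Prop :=
  (∀ p, 0 ≤ g p) ∧ IntegrableOn g Ω μ ∧
    ∃ A : Set X, A ⊆ Ω ∧ μ A = 0 ∧
      ∀ x ∈ Ω \ A, ∀ y ∈ Ω \ A,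
        dist x y ≤ cH * min (infDist x Ωᶜ) (infDist y Ωᶜ) →
        |u x - u y| ≤ dist x y * (g x + g y)

lemma doubling_iter {X : Type} [MetricSpace X] [MeasurableSpace X] {μ : Measure X} {C_d : ℝ}
    (hD : ∀ (x : X) (r : ℝ), 0 < r →
      0 < μ (ball x r) ∧ μ (ball x (2 * r)) ≤ ENNReal.ofReal C_d * μ (ball x r) ∧
        μ (ball x r) < ⊤)
    (k : ℕ) (x : X) (r : ℝ) (hr : 0 < r) :
    μ (ball x (2 ^ k * r)) ≤ (ENNReal.ofReal C_d) ^ k * μ (ball x r) := by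
  induction k with
  | zero => simp
  | succ n ih =>
      have h1 : (2:ℝ) ^ (n+1) * r = 2 * (2 ^ n * r) := by ring
      rw [h1]
      calc μ (ball x (2 * (2 ^ n * r))) ≤ ENNReal.ofReal C_d * μ (ball x (2 ^ n * r)) :=
            (hD x _ (by positivity)).2.1
        _ ≤ ENNReal.ofReal C_d * ((ENNReal.ofReal C_d) ^ n * μ (ball x r)) :=
            mul_le_mul_right ih _
        _ = (ENNReal.ofReal C_d) ^ (n+1) * μ (ball x r) := by rw [pow_succ]; ring

lemma ball_meas_le {X : Type} [MetricSpace X] [MeasurableSpace X] {μ : Measure X} {C_d : ℝ}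
    (hD : ∀ (x : X) (r : ℝ), 0 < r →
      0 < μ (ball x r) ∧ μ (ball x (2 * r)) ≤ ENNReal.ofReal C_d * μ (ball x r) ∧
        μ (ball x r) < ⊤)
    (k : ℕ) (x : X) {r s : ℝ} (hr : 0 < r) (hs : s ≤ 2 ^ k * r) :
    μ (ball x s) ≤ (ENNReal.ofReal C_d) ^ k * μ (ball x r) :=
  le_trans (measure_mono (ball_subset_ball hs)) (doubling_iter hD k x r hr)

set_option maxHeartbeats 800000 in
/-- A space with a doubling measure has totally bounded balls. -/
lemma doubling_totallyBounded {X : Type} [MetricSpace X] [MeasurableSpace X] [BorelSpace X]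
    {μ : Measure X}
    {C_d : ℝ} (hCd : 1 ≤ C_d)
    (hD : ∀ (x : X) (r : ℝ), 0 < r →
      0 < μ (ball x r) ∧ μ (ball x (2 * r)) ≤ ENNReal.ofReal C_d * μ (ball x r) ∧
        μ (ball x r) < ⊤)
    (c : X) (R : ℝ) : TotallyBounded (ball c R) := by
  classical
  rcases le_or_gt R 0 with hR | hR
  · rw [ball_eq_empty.2 hR]; exact totallyBounded_empty
  rw [Metric.totallyBounded_iff]
  intro ε hε
  by_contra hcon
  push_neg at hcon
  have hstep : ∀ t : Finset X, ∃ p, p ∈ ball c R ∧ ∀ y ∈ t, ε ≤ dist p y := by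
    intro t
    have h1 := hcon (↑t) t.finite_toSet
    rw [Set.not_subset] at h1
    obtain ⟨p, hp1, hp2⟩ := h1
    refine ⟨p, hp1, fun y hy => ?_⟩
    by_contra hlt
    push_neg at hlt
    exact hp2 (Set.mem_biUnion hy (mem_ball.2 hlt))
  choose f hf1 hf2 using hstep
  let T : ℕ → Finset X := fun n => Nat.rec ∅ (fun _ s => insert (f s) s) n
  have hT : ∀ n, T (n+1) = insert (f (T n)) (T n) := fun n => rfl
  set p : ℕ → X := fun n => f (T n) with hpdef
  have hTmono : ∀ m n : ℕ, m ≤ n → T m ⊆ T n := by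
    intro m n hmn
    induction n with
    | zero =>
        have : m = 0 := Nat.le_zero.1 hmn
        subst this; exact subset_rfl
    | succ n ih =>
        rcases Nat.lt_or_ge m (n+1) with h | h
        · have h2 := ih (by omega)
          rw [hT]
          exact h2.trans (Finset.subset_insert _ _)
        · have : m = n + 1 := by omega
          subst this; exact subset_rfl
  have hpmem : ∀ n, p n ∈ ball c R := fun n => hf1 (T n)
  have hpT : ∀ n, p n ∈ T (n+1) := fun n => by
    rw [hT]; exact Finset.mem_insert_self _ _
  have hsep : ∀ m n : ℕ, m < n → ε ≤ dist (p n) (p m) := by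
    intro m n hmn
    exact hf2 (T n) (p m) (hTmono (m+1) n hmn (hpT m))
  have hdisj : ∀ m n : ℕ, m ≠ n → Disjoint (ball (p m) (ε/2)) (ball (p n) (ε/2)) := by
    intro m n hmn
    have hd : ε ≤ dist (p m) (p n) := by
      rcases lt_or_gt_of_ne hmn with h | h
      · rw [dist_comm]; exact hsep m n h
      · exact hsep n m h
    exact ball_disjoint_ball (by linarith)
  obtain ⟨mexp, hmexp⟩ := pow_unbounded_of_one_lt ((2*R)/(ε/2)) (by norm_num : (1:ℝ) < 2)
  have hbound : ∀ n : ℕ, μ (ball c R) ≤ (ENNReal.ofReal C_d) ^ mexp * μ (ball (p n) (ε/2)) := by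
    intro n
    have hsub : ball c R ⊆ ball (p n) (2*R) := by
      intro w hw
      rw [mem_ball] at *
      have h2 := hpmem n
      rw [mem_ball] at h2
      calc dist w (p n) ≤ dist w c + dist c (p n) := dist_triangle _ _ _
        _ < R + R := by rw [dist_comm c (p n)]; exact add_lt_add hw h2
        _ = 2*R := by ring
    have h3 : 2*R ≤ 2 ^ mexp * (ε/2) := by
      rw [div_lt_iff₀ (by positivity)] at hmexp
      linarith
    calc μ (ball c R) ≤ μ (ball (p n) (2*R)) := measure_mono hsub
      _ ≤ (ENNReal.ofReal C_d) ^ mexp * μ (ball (p n) (ε/2)) :=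
          ball_meas_le hD mexp (p n) (by positivity) h3
  have hv0 : μ (ball c R) ≠ 0 := (hD c R hR).1.ne'
  have hvne : μ (ball c R) ≠ ⊤ := (hD c R hR).2.2.ne
  have hCm : (ENNReal.ofReal C_d) ^ mexp ≠ ⊤ := ENNReal.pow_ne_top ENNReal.ofReal_ne_top
  have hlow : ∀ n : ℕ, μ (ball c R) / (ENNReal.ofReal C_d) ^ mexp ≤ μ (ball (p n) (ε/2)) :=
    fun n => ENNReal.div_le_of_le_mul (by rw [mul_comm]; exact hbound n)
  set v : ℝ≥0∞ := μ (ball c R) / (ENNReal.ofReal C_d) ^ mexp with hvdef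
  have hv0' : v ≠ 0 := by
    rw [hvdef]
    simp only [ne_eq, ENNReal.div_eq_zero_iff, not_or]
    exact ⟨hv0, hCm⟩
  have hCd0' : (ENNReal.ofReal C_d) ≠ 0 := by
    simp only [ne_eq, ENNReal.ofReal_eq_zero, not_le]
    linarith
  have hvne' : v ≠ ⊤ := by
    rw [hvdef]
    intro h
    rw [ENNReal.div_eq_top] at h
    rcases h with ⟨_, h⟩ | ⟨h, _⟩
    · exact pow_ne_zero mexp hCd0' h
    · exact hvne h
  have hsum : ∀ K : ℕ, (K : ℝ≥0∞) * v ≤ μ (ball c (R + ε)) := by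
    intro K
    have hUsub : (⋃ i ∈ Finset.range K, ball (p i) (ε/2)) ⊆ ball c (R+ε) := by
      intro w hw
      simp only [Set.mem_iUnion] at hw
      obtain ⟨i, _, hi⟩ := hw
      rw [mem_ball] at *
      have h2 := hpmem i
      rw [mem_ball] at h2
      calc dist w c ≤ dist w (p i) + dist (p i) c := dist_triangle _ _ _
        _ < ε/2 + R := add_lt_add hi h2
        _ ≤ R + ε := by linarith
    calc (K : ℝ≥0∞) * v = ∑ _i ∈ Finset.range K, v := by
          rw [Finset.sum_const, Finset.card_range, nsmul_eq_mul]
      _ ≤ ∑ i ∈ Finset.range K, μ (ball (p i) (ε/2)) :=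
          Finset.sum_le_sum (fun i _ => hlow i)
      _ = μ (⋃ i ∈ Finset.range K, ball (p i) (ε/2)) :=
          (measure_biUnion_finset (fun i _ j _ hij => hdisj i j hij)
            (fun i _ => measurableSet_ball)).symm
      _ ≤ μ (ball c (R+ε)) := measure_mono hUsub
  have hV : μ (ball c (R+ε)) ≠ ⊤ := (hD c (R+ε) (by linarith)).2.2.ne
  have hQfin : μ (ball c (R+ε)) / v ≠ ⊤ := (ENNReal.div_lt_top hV hv0').ne
  have hle : ∀ K : ℕ, (K : ℝ≥0∞) ≤ μ (ball c (R+ε)) / v := fun K =>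
    (ENNReal.le_div_iff_mul_le (Or.inl hv0') (Or.inl hvne')).2 (hsum K)
  obtain ⟨K, hK⟩ := ENNReal.exists_nat_gt hQfin
  exact absurd (hle K) (not_le.2 hK)

set_option maxHeartbeats 800000 in
/-- The inner bound in the Fubini argument: the kernel
`𝟙_{d(x,z) < β dist(x,Ωᶜ)} / μ(B(x, β dist(x,Ωᶜ)))` has `x`-integral bounded by `C_d⁴`. -/
lemma inner_bound {X : Type} [MetricSpace X] [MeasurableSpace X] [BorelSpace X] (μ : Measure X)
    {C_d β : ℝ}
    (hD : ∀ (x : X) (r : ℝ), 0 < r →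
      0 < μ (ball x r) ∧ μ (ball x (2 * r)) ≤ ENNReal.ofReal C_d * μ (ball x r) ∧
        μ (ball x r) < ⊤)
    (hβ0 : 0 < β) (hβ34 : β < 3/4) (hC4ne : (ENNReal.ofReal C_d) ^ 4 ≠ ⊤)
    (hC40 : (ENNReal.ofReal C_d) ^ 4 ≠ 0) (Ω : Set X) (z : X) :
    ∫⁻ x, ({p : X × X | dist p.2 p.1 < β * infDist p.1 Ωᶜ}.indicator
        (fun _ => (1:ℝ≥0∞)) (x, z)) * (μ (ball x (β * infDist x Ωᶜ)))⁻¹ ∂μ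
      ≤ (ENNReal.ofReal C_d) ^ 4 := by
  set S : Set (X × X) := {p | dist p.2 p.1 < β * infDist p.1 Ωᶜ} with hSdef
  set C4 : ℝ≥0∞ := (ENNReal.ofReal C_d) ^ 4 with hC4def
  set dz : ℝ := infDist z Ωᶜ with hdzdef
  by_cases hdz : dz ≤ 0
  · have h0 : ∀ x : X, S.indicator (fun _ => (1:ℝ≥0∞)) (x, z)
        * (μ (ball x (β * infDist x Ωᶜ)))⁻¹ = 0 := by
      intro x
      have hxS : (x, z) ∉ S := by
        intro hxS
        rw [hSdef] at hxS
        simp only [Set.mem_setOf_eq] at hxS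
        have hprod : 0 < β * infDist x Ωᶜ := lt_of_le_of_lt dist_nonneg hxS
        have hdx : 0 < infDist x Ωᶜ := by
          rcases mul_pos_iff.1 hprod with ⟨_, h⟩ | ⟨h, _⟩
          · exact h
          · linarith
        have h2 : infDist x Ωᶜ ≤ dz + dist x z := infDist_le_infDist_add_dist
        have h3 : dist x z < β * infDist x Ωᶜ := by rw [dist_comm]; exact hxS
        nlinarith
      rw [Set.indicator_of_notMem hxS, zero_mul]
    rw [lintegral_congr h0]
    simp
  push_neg at hdz
  set R : ℝ := β * dz / (1 - β) with hRdef
  have hR0 : 0 < R := by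
    rw [hRdef]; apply div_pos (by positivity); linarith
  have hμR0 : μ (ball z R) ≠ 0 := (hD z R hR0).1.ne'
  have hμRne : μ (ball z R) ≠ ⊤ := (hD z R hR0).2.2.ne
  have hpt : ∀ x : X, S.indicator (fun _ => (1:ℝ≥0∞)) (x, z)
      * (μ (ball x (β * infDist x Ωᶜ)))⁻¹
      ≤ (ball z R).indicator (fun _ => C4 * (μ (ball z R))⁻¹) x := by
    intro x
    by_cases hxS : (x, z) ∈ S
    · have hxS' := hxS
      rw [hSdef] at hxS'
      simp only [Set.mem_setOf_eq] at hxS'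
      have hprod : 0 < β * infDist x Ωᶜ := lt_of_le_of_lt dist_nonneg hxS'
      have hdx : 0 < infDist x Ωᶜ := by
        rcases mul_pos_iff.1 hprod with ⟨_, h⟩ | ⟨h, _⟩
        · exact h
        · linarith
      have h2 : infDist x Ωᶜ ≤ dz + dist x z := infDist_le_infDist_add_dist
      have hdzx : dist x z < β * infDist x Ωᶜ := by rw [dist_comm]; exact hxS'
      have hdxlt : infDist x Ωᶜ * (1 - β) < dz := by nlinarith
      have hxzR : dist x z < R := by
        rw [hRdef]
        rw [div_eq_mul_inv, mul_comm (β * dz)]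
        rw [← div_eq_inv_mul]
        rw [lt_div_iff₀ (by linarith : (0:ℝ) < 1 - β)]
        nlinarith
      have hxR : x ∈ ball z R := mem_ball.2 hxzR
      have hsub : ball z R ⊆ ball x (dist x z + R) := by
        intro w hw
        rw [mem_ball] at hw ⊢
        calc dist w x ≤ dist w z + dist z x := dist_triangle _ _ _
          _ < R + dist z x := by linarith
          _ = dist x z + R := by rw [dist_comm z x]; ring
      have hs2 : dist x z + R ≤ 2 ^ 4 * (β * infDist x Ωᶜ) := by
        have hdzlt : dz < 2 * infDist x Ωᶜ := by
          have h2' : dz ≤ infDist x Ωᶜ + dist z x := infDist_le_infDist_add_dist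
          nlinarith [mul_pos (by linarith : (0:ℝ) < 1 - β) hdx, hxS']
        have hRlt : R < 8 * (β * infDist x Ωᶜ) := by
          rw [hRdef, div_lt_iff₀ (by linarith : (0:ℝ) < 1 - β)]
          nlinarith
        norm_num
        nlinarith
      have hball : μ (ball z R) ≤ C4 * μ (ball x (β * infDist x Ωᶜ)) := by
        calc μ (ball z R) ≤ μ (ball x (dist x z + R)) := measure_mono hsub
          _ ≤ (ENNReal.ofReal C_d) ^ 4 * μ (ball x (β * infDist x Ωᶜ)) :=
              ball_meas_le hD 4 x (by positivity) hs2
      have hDinv : (μ (ball x (β * infDist x Ωᶜ)))⁻¹ ≤ C4 * (μ (ball z R))⁻¹ := by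
        have h3 : μ (ball z R) / C4 ≤ μ (ball x (β * infDist x Ωᶜ)) :=
          ENNReal.div_le_of_le_mul (by rw [mul_comm]; exact hball)
        calc (μ (ball x (β * infDist x Ωᶜ)))⁻¹ ≤ (μ (ball z R) / C4)⁻¹ :=
            ENNReal.inv_le_inv.2 h3
          _ = C4 / μ (ball z R) := ENNReal.inv_div (Or.inl hC4ne) (Or.inl hC40)
          _ = C4 * (μ (ball z R))⁻¹ := div_eq_mul_inv _ _
      rw [Set.indicator_of_mem hxS, one_mul, Set.indicator_of_mem hxR]
      exact hDinv
    · rw [Set.indicator_of_notMem hxS, zero_mul]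
      exact zero_le
  calc ∫⁻ x, S.indicator (fun _ => (1:ℝ≥0∞)) (x, z) * (μ (ball x (β * infDist x Ωᶜ)))⁻¹ ∂μ
      ≤ ∫⁻ x, (ball z R).indicator (fun _ => C4 * (μ (ball z R))⁻¹) x ∂μ :=
        lintegral_mono hpt
    _ = C4 * (μ (ball z R))⁻¹ * μ (ball z R) := lintegral_indicator_const measurableSet_ball _
    _ = C4 * ((μ (ball z R))⁻¹ * μ (ball z R)) := by ring
    _ = C4 := by rw [ENNReal.inv_mul_cancel hμR0 hμRne, mul_one]

set_option maxHeartbeats 1600000 in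
/-- The key one-sided comparison: from an admissible gradient with parameter `ca` we
produce one with parameter `cb`, at the cost of a constant depending on `C_d, ca, cb`. -/
lemma hajlasz_key (C_d ca cb : ℝ) (hCd : 1 ≤ C_d)
    (hca : ca ∈ Set.Ioo (0 : ℝ) 1) (hcb : cb ∈ Set.Ioo (0 : ℝ) 1) :
    ∃ C ≥ (1 : ℝ), ∀ (X : Type) [MetricSpace X] [MeasurableSpace X]
      [BorelSpace X] (μ : Measure X),
      (∀ (x : X) (r : ℝ), 0 < r →
        0 < μ (ball x r) ∧ μ (ball x (2 * r)) ≤ ENNReal.ofReal C_d * μ (ball x r) ∧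
          μ (ball x r) < ⊤) →
      (∀ x y : X, ∃ γ : ℝ → X, γ 0 = x ∧ γ (dist x y) = y ∧
        LipschitzOnWith 1 γ (Set.Icc (0 : ℝ) (dist x y))) →
      ∀ (Ω : Set X), IsOpen Ω → Ω.Nonempty → Ωᶜ.Nonempty →
      ∀ u g : X → ℝ, HajlaszAdmissibleLoc μ Ω ca u g →
        ∃ g' : X → ℝ, HajlaszAdmissibleLoc μ Ω cb u g' ∧
          ∫ p in Ω, g' p ∂μ ≤ C * ∫ p in Ω, g p ∂μ := by
  obtain ⟨hca0, hca1⟩ := hca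
  obtain ⟨hcb0, hcb1⟩ := hcb
  set N : ℕ := max 2 ⌈2 / (ca * (1 - cb))⌉₊ with hNdef
  set q : ℕ := ⌈1 / ca⌉₊ with hqdef
  set k : ℕ := N + q + 3 with hkdef
  have hCd0 : (0:ℝ) < C_d := lt_of_lt_of_le one_pos hCd
  have hCpow : (1:ℝ) ≤ C_d ^ (k+4) := one_le_pow₀ hCd
  have hN2 : 2 ≤ N := le_max_left _ _
  have hN2R : (2:ℝ) ≤ (N:ℝ) := by exact_mod_cast hN2
  have hN0 : (0:ℝ) < N := by linarith
  have hNne : (N:ℝ) ≠ 0 := ne_of_gt hN0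
  have hNge : 2 / (ca * (1 - cb)) ≤ (N:ℝ) := by
    refine le_trans (Nat.le_ceil _) ?_
    exact_mod_cast le_max_right 2 ⌈2 / (ca * (1 - cb))⌉₊
  have hqge : 1 / ca ≤ (q:ℝ) := Nat.le_ceil _
  have hq1 : 1 ≤ ca * q := by
    rw [div_le_iff₀ hca0] at hqge
    linarith [hqge]
  have hpow2 : 4 * (N:ℝ) ≤ 2 ^ k * ca := by
    have h1 : (N:ℝ) ≤ 2 ^ N := by exact_mod_cast (Nat.lt_two_pow_self (n := N)).le
    have h2 : (q:ℝ) ≤ 2 ^ q := by exact_mod_cast (Nat.lt_two_pow_self (n := q)).le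
    have h3 : (2:ℝ) ^ k = 2 ^ N * 2 ^ q * 8 := by
      rw [hkdef, pow_add, pow_add]; norm_num
    have h4 : (N:ℝ) * (q:ℝ) ≤ 2 ^ N * 2 ^ q :=
      mul_le_mul h1 h2 (by positivity) (by positivity)
    have hq0 : (0:ℝ) < q := by nlinarith
    nlinarith [mul_le_mul_of_nonneg_right h4 hca0.le, mul_pos hN0 hq0]
  refine ⟨4 + 8 * C_d ^ (k + 4), by linarith, ?_⟩
  intro X _ _ _ μ hD hgeo Ω hΩ hΩne hΩcne u g hg
  obtain ⟨hg0, hgInt, A, hAsub, hA0, hHaj⟩ := hg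
  have hΩm : MeasurableSet Ω := hΩ.measurableSet
  have hgt : Integrable (Ω.indicator g) μ := (integrable_indicator_iff hΩm).2 hgInt
  obtain ⟨x₀, hx₀⟩ := hΩne
  -- separability and second countability from the doubling measure
  haveI hsep : TopologicalSpace.SeparableSpace X := by
    rw [← TopologicalSpace.isSeparable_univ_iff]
    have huniv : (Set.univ : Set X) = ⋃ n : ℕ, ball x₀ (n+1) := by
      ext p
      simp only [Set.mem_iUnion, mem_ball, Set.mem_univ, true_iff]
      obtain ⟨n, hn⟩ := exists_nat_gt (dist p x₀)
      exact ⟨n, by push_cast; linarith⟩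
    rw [huniv]
    exact TopologicalSpace.isSeparable_iUnion.2
      (fun n => (doubling_totallyBounded hCd hD x₀ (n+1)).isSeparable)
  haveI : SecondCountableTopology X := UniformSpace.secondCountable_of_separable X
  haveI : SigmaFinite μ := by
    refine ⟨⟨⟨fun n => ball x₀ (n+1), fun _ => trivial,
      fun n => (hD x₀ (n+1) (by positivity)).2.2, ?_⟩⟩⟩
    ext p
    simp only [Set.mem_iUnion, mem_ball, Set.mem_univ, iff_true]
    obtain ⟨n, hn⟩ := exists_nat_gt (dist p x₀)
    exact ⟨n, by push_cast; linarith⟩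
  set g₀ : X → ℝ := hgt.1.mk (Ω.indicator g) with hg₀def
  have hg₀m : StronglyMeasurable g₀ := hgt.1.stronglyMeasurable_mk
  have hae : Ω.indicator g =ᵐ[μ] g₀ := hgt.1.ae_eq_mk
  set G : X → ℝ≥0∞ := fun w => ENNReal.ofReal (g₀ w) with hGdef
  have hGm : Measurable G := ENNReal.measurable_ofReal.comp hg₀m.measurable
  have hind0 : 0 ≤ᵐ[μ] Ω.indicator g := Filter.Eventually.of_forall fun p => by
    by_cases hp : p ∈ Ω <;> simp [Set.indicator_apply, hp, hg0 p]
  have hGae : (fun w => ENNReal.ofReal (Ω.indicator g w)) =ᵐ[μ] G := by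
    filter_upwards [hae] with w hw
    rw [hGdef, hw]
  have hIfin : ∫⁻ w, G w ∂μ < ⊤ := by
    rw [← lintegral_congr_ae hGae]
    exact (hasFiniteIntegral_iff_ofReal hind0).1 hgt.2
  set β : ℝ := 3/4 * cb with hβdef
  have hβ0 : 0 < β := by rw [hβdef]; linarith
  have hβ34 : β < 3/4 := by rw [hβdef]; linarith
  set ρ : X → ℝ := fun x => β * infDist x Ωᶜ with hρdef
  set S : Set (X × X) := {p | dist p.2 p.1 < β * infDist p.1 Ωᶜ} with hSdef
  have hSopen : IsOpen S := by
    apply isOpen_lt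
    · exact continuous_dist.comp (continuous_snd.prodMk continuous_fst)
    · exact continuous_const.mul ((continuous_infDist_pt Ωᶜ).comp continuous_fst)
  have hSmeas : MeasurableSet S := hSopen.measurableSet
  set D : X → ℝ≥0∞ := fun x => μ (ball x (ρ x)) with hDdef
  set NumF : X → ℝ≥0∞ := fun x => ∫⁻ z in ball x (ρ x), G z ∂μ with hNumFdef
  have hSball : ∀ x z : X, ((x, z) ∈ S) ↔ z ∈ ball x (ρ x) := by
    intro x z; simp [hSdef, hρdef, mem_ball]
  have hNumF_eq : ∀ x, NumF x = ∫⁻ z, S.indicator (fun _ => (1:ℝ≥0∞)) (x, z) * G z ∂μ := by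
    intro x
    have h0 : NumF x = ∫⁻ z in ball x (ρ x), G z ∂μ := rfl
    rw [h0, ← lintegral_indicator measurableSet_ball]
    apply lintegral_congr
    intro w
    by_cases hw : w ∈ ball x (ρ x)
    · rw [Set.indicator_of_mem hw, Set.indicator_of_mem ((hSball x w).2 hw), one_mul]
    · rw [Set.indicator_of_notMem hw,
        Set.indicator_of_notMem (fun h => hw ((hSball x w).1 h)), zero_mul]
  have hD_eq : ∀ x, D x = ∫⁻ z, S.indicator (fun _ => (1:ℝ≥0∞)) (x, z) ∂μ := by
    intro x
    have h0 : D x = μ (ball x (ρ x)) := rfl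
    rw [h0, ← lintegral_indicator_one measurableSet_ball]
    apply lintegral_congr
    intro w
    by_cases hw : w ∈ ball x (ρ x)
    · rw [Set.indicator_of_mem hw, Set.indicator_of_mem ((hSball x w).2 hw)]
      rfl
    · rw [Set.indicator_of_notMem hw,
        Set.indicator_of_notMem (fun h => hw ((hSball x w).1 h))]
  have hindm : Measurable (fun p : X × X => S.indicator (fun _ => (1:ℝ≥0∞)) p) :=
    measurable_const.indicator hSmeas
  have hNumF_meas : Measurable NumF := by
    have h1 : Measurable (Function.uncurry fun (x : X) (z : X) =>
        S.indicator (fun _ => (1:ℝ≥0∞)) (x, z) * G z) := by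
      rw [Function.uncurry_def]
      exact (hindm.comp (measurable_fst.prodMk measurable_snd)).mul (hGm.comp measurable_snd)
    have h2 := h1.lintegral_prod_right (ν := μ)
    rw [show NumF = (fun x => ∫⁻ z, S.indicator (fun _ => (1:ℝ≥0∞)) (x, z) * G z ∂μ)
      from funext hNumF_eq]
    exact h2
  have hD_meas : Measurable D := by
    have h1 : Measurable (Function.uncurry fun (x : X) (z : X) =>
        S.indicator (fun _ => (1:ℝ≥0∞)) (x, z)) := by
      rw [Function.uncurry_def]
      exact hindm.comp (measurable_fst.prodMk measurable_snd)
    have h2 := h1.lintegral_prod_right (ν := μ)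
    rw [show D = (fun x => ∫⁻ z, S.indicator (fun _ => (1:ℝ≥0∞)) (x, z) ∂μ)
      from funext hD_eq]
    exact h2
  set H : X → ℝ≥0∞ := fun x => NumF x / D x with hHdef
  have hH_meas : Measurable H := hNumF_meas.div hD_meas
  have hNumF_le : ∀ x, NumF x ≤ ∫⁻ w, G w ∂μ := fun x => setLIntegral_le_lintegral _ _
  have hNumF_ne : ∀ x, NumF x ≠ ⊤ := fun x => ((hNumF_le x).trans_lt hIfin).ne
  have hH_lt : ∀ x, H x < ⊤ := by
    intro x
    by_cases hDx : D x = 0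
    · have h1 : NumF x = 0 := setLIntegral_measure_zero _ _ hDx
      have h2 : H x = NumF x / D x := rfl
      rw [h2, h1]
      simp
    · exact ENNReal.div_lt_top (hNumF_ne x) hDx
  have hH_eq : ∀ x, H x = ∫⁻ z, S.indicator (fun _ => (1:ℝ≥0∞)) (x, z) * G z * (D x)⁻¹ ∂μ := by
    intro x
    have h1 : ∀ w, S.indicator (fun _ => (1:ℝ≥0∞)) (x, w) * G w * (D x)⁻¹
        = (ball x (ρ x)).indicator (fun w => G w * (D x)⁻¹) w := by
      intro w
      by_cases hw : w ∈ ball x (ρ x)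
      · rw [Set.indicator_of_mem ((hSball x w).2 hw), Set.indicator_of_mem hw, one_mul]
      · rw [Set.indicator_of_notMem (fun h => hw ((hSball x w).1 h)),
          Set.indicator_of_notMem hw, zero_mul, zero_mul]
    rw [lintegral_congr h1, lintegral_indicator measurableSet_ball]
    by_cases hDx : D x = 0
    · have h2 : ∫⁻ w in ball x (ρ x), G w * (D x)⁻¹ ∂μ = 0 :=
        setLIntegral_measure_zero _ _ hDx
      have h3 : NumF x = 0 := setLIntegral_measure_zero _ _ hDx
      have h4 : H x = NumF x / D x := rfl
      rw [h4, h3, h2]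
      simp
    · rw [lintegral_mul_const' _ _ (by simp [hDx])]
      have h4 : H x = NumF x / D x := rfl
      have h5 : NumF x = ∫⁻ w in ball x (ρ x), G w ∂μ := rfl
      rw [h4, h5, div_eq_mul_inv]
  set C4 : ℝ≥0∞ := (ENNReal.ofReal C_d) ^ 4 with hC4def
  have hofCd1 : (1:ℝ≥0∞) ≤ ENNReal.ofReal C_d := by
    rw [← ENNReal.ofReal_one]; exact ENNReal.ofReal_le_ofReal hCd
  have hofCd_ne : (ENNReal.ofReal C_d) ≠ ⊤ := ENNReal.ofReal_ne_top
  have hC4ne : C4 ≠ ⊤ := by rw [hC4def]; exact ENNReal.pow_ne_top hofCd_ne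
  have hC40 : C4 ≠ 0 := by
    rw [hC4def]
    exact pow_ne_zero _ (fun h => by simp [h] at hofCd1)
  have hinner : ∀ z : X,
      ∫⁻ x, S.indicator (fun _ => (1:ℝ≥0∞)) (x, z) * (D x)⁻¹ ∂μ ≤ C4 := by
    intro z
    have h := inner_bound μ hD hβ0 hβ34 (by rw [hC4def] at hC4ne; exact hC4ne)
      (by rw [hC4def] at hC40; exact hC40) Ω z
    calc ∫⁻ x, S.indicator (fun _ => (1:ℝ≥0∞)) (x, z) * (D x)⁻¹ ∂μ
        = ∫⁻ x, ({p : X × X | dist p.2 p.1 < β * infDist p.1 Ωᶜ}.indicator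
            (fun _ => (1:ℝ≥0∞)) (x, z)) * (μ (ball x (β * infDist x Ωᶜ)))⁻¹ ∂μ := by
          apply lintegral_congr
          intro x
          have h1 : D x = μ (ball x (β * infDist x Ωᶜ)) := rfl
          rw [hSdef, h1]
      _ ≤ (ENNReal.ofReal C_d) ^ 4 := h
      _ = C4 := by rw [hC4def]
  have hHint : ∫⁻ x, H x ∂μ ≤ C4 * ∫⁻ w, G w ∂μ := by
    have hswap : ∫⁻ x, H x ∂μ
        = ∫⁻ z, ∫⁻ x, S.indicator (fun _ => (1:ℝ≥0∞)) (x, z) * G z * (D x)⁻¹ ∂μ ∂μ := by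
      rw [lintegral_congr hH_eq]
      apply lintegral_lintegral_swap
      apply Measurable.aemeasurable
      rw [Function.uncurry_def]
      exact ((hindm.comp (measurable_fst.prodMk measurable_snd)).mul
        (hGm.comp measurable_snd)).mul ((hD_meas.comp measurable_fst).inv)
    rw [hswap]
    have hz : ∀ z : X, ∫⁻ x, S.indicator (fun _ => (1:ℝ≥0∞)) (x, z) * G z * (D x)⁻¹ ∂μ
        ≤ G z * C4 := by
      intro z
      have h1 : ∀ x, S.indicator (fun _ => (1:ℝ≥0∞)) (x, z) * G z * (D x)⁻¹
          = G z * (S.indicator (fun _ => (1:ℝ≥0∞)) (x, z) * (D x)⁻¹) := by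
        intro x; ring
      rw [lintegral_congr h1, lintegral_const_mul' _ _ ENNReal.ofReal_ne_top]
      exact mul_le_mul_right (hinner z) _
    calc ∫⁻ z, ∫⁻ x, S.indicator (fun _ => (1:ℝ≥0∞)) (x, z) * G z * (D x)⁻¹ ∂μ ∂μ
        ≤ ∫⁻ z, G z * C4 ∂μ := lintegral_mono hz
      _ = (∫⁻ z, G z ∂μ) * C4 := lintegral_mul_const' _ _ hC4ne
      _ = C4 * ∫⁻ w, G w ∂μ := mul_comm _ _
  set H' : X → ℝ := fun x => (H x).toReal with hH'def
  have hH'0 : ∀ x, 0 ≤ H' x := fun x => ENNReal.toReal_nonneg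
  have hH'int : Integrable H' μ := by
    apply integrable_toReal_of_lintegral_ne_top hH_meas.aemeasurable
    exact (lt_of_le_of_lt hHint (ENNReal.mul_lt_top hC4ne.lt_top hIfin)).ne
  have hIeq : (∫⁻ w, G w ∂μ).toReal = ∫ p in Ω, g p ∂μ := by
    rw [← lintegral_congr_ae hGae, ← integral_eq_lintegral_of_nonneg_ae hind0 hgt.1,
      integral_indicator hΩm]
  have hH'val : ∫ x in Ω, H' x ∂μ ≤ C_d ^ 4 * ∫ p in Ω, g p ∂μ := by
    have h1 : ∫ x in Ω, H' x ∂μ ≤ ∫ x, H' x ∂μ :=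
      setIntegral_le_integral hH'int (Filter.Eventually.of_forall hH'0)
    have h2 : ∫ x, H' x ∂μ = (∫⁻ x, H x ∂μ).toReal :=
      integral_toReal hH_meas.aemeasurable (Filter.Eventually.of_forall hH_lt)
    have h3 : (∫⁻ x, H x ∂μ).toReal ≤ (C4 * ∫⁻ w, G w ∂μ).toReal :=
      ENNReal.toReal_mono (ENNReal.mul_ne_top hC4ne hIfin.ne) hHint
    have h4 : (C4 * ∫⁻ w, G w ∂μ).toReal = C_d ^ 4 * ∫ p in Ω, g p ∂μ := by
      rw [ENNReal.toReal_mul, hIeq, hC4def, ENNReal.toReal_pow,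
        ENNReal.toReal_ofReal hCd0.le]
    linarith
  classical
  set g' : X → ℝ := fun p => 4 * g p + 8 * C_d ^ k * H' p with hg'def
  have hCk0R : (0:ℝ) ≤ C_d ^ k := by positivity
  have hg'0 : ∀ p, 0 ≤ g' p := by
    intro p
    have h1 : g' p = 4 * g p + 8 * C_d ^ k * H' p := rfl
    rw [h1]
    nlinarith [mul_nonneg hCk0R (hH'0 p), hg0 p]
  have hg'int : IntegrableOn g' Ω μ := by
    apply Integrable.add
    · exact hgInt.const_mul 4
    · exact (hH'int.const_mul _).integrableOn
  have hg'norm : ∫ p in Ω, g' p ∂μ ≤ (4 + 8 * C_d ^ (k + 4)) * ∫ p in Ω, g p ∂μ := by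
    have h1 : ∫ p in Ω, g' p ∂μ
        = 4 * ∫ p in Ω, g p ∂μ + 8 * C_d ^ k * ∫ p in Ω, H' p ∂μ := by
      have h0 : g' = fun p => 4 * g p + 8 * C_d ^ k * H' p := rfl
      rw [h0, integral_add (hgInt.const_mul 4) ((hH'int.const_mul _).integrableOn),
        integral_const_mul, integral_const_mul]
    have h2 : C_d ^ k * C_d ^ 4 = C_d ^ (k + 4) := (pow_add C_d k 4).symm
    have h3 : 8 * C_d ^ k * ∫ p in Ω, H' p ∂μ
        ≤ 8 * C_d ^ k * (C_d ^ 4 * ∫ p in Ω, g p ∂μ) :=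
      mul_le_mul_of_nonneg_left hH'val (by positivity)
    rw [h1, ← h2]
    linarith only [h3]
  refine ⟨g', ⟨hg'0, hg'int, A, hAsub, hA0, ?_⟩, hg'norm⟩
  -- the pointwise Hajłasz inequality with parameter cb
  intro x hx y hy hdxy
  set dx : ℝ := infDist x Ωᶜ with hdxdef
  set dy : ℝ := infDist y Ωᶜ with hdydef
  set m : ℝ := min dx dy with hmdef
  set d : ℝ := dist x y with hddef
  have hd0 : 0 ≤ d := dist_nonneg
  by_cases hEasy : d ≤ ca * m
  · have h1 := hHaj x hx y hy hEasy
    have h2 : g x + g y ≤ g' x + g' y := by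
      have e1 : g' x = 4 * g x + 8 * C_d ^ k * H' x := rfl
      have e2 : g' y = 4 * g y + 8 * C_d ^ k * H' y := rfl
      rw [e1, e2]
      linarith only [mul_nonneg hCk0R (hH'0 x), mul_nonneg hCk0R (hH'0 y), hg0 x, hg0 y]
    calc |u x - u y| ≤ d * (g x + g y) := h1
      _ ≤ d * (g' x + g' y) := mul_le_mul_of_nonneg_left h2 hd0
  push_neg at hEasy
  -- hard case: ca * m < d ≤ cb * m
  have hm0 : 0 < m := by
    by_contra hm
    push_neg at hm
    have h1 : cb * m ≤ 0 := mul_nonpos_of_nonneg_of_nonpos hcb0.le hm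
    have h2 : d = 0 := le_antisymm (le_trans hdxy h1) hd0
    rw [h2] at hEasy
    have h4 : m < 0 := by
      by_contra h
      push_neg at h
      exact absurd hEasy (not_lt.2 (mul_nonneg hca0.le h))
    have h5 : cb * m < 0 := mul_neg_of_pos_of_neg hcb0 h4
    linarith only [hdxy, h5, hd0, h2]
  have hd : 0 < d := lt_of_le_of_lt (mul_nonneg hca0.le hm0.le) hEasy
  have hdcb : d ≤ cb * m := hdxy
  have hmdx : m ≤ dx := min_le_left _ _
  have hmdy : m ≤ dy := min_le_right _ _
  have hdxm : dx ≤ m + d := by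
    have h1 : dx ≤ dy + d := infDist_le_infDist_add_dist
    rcases le_total dx dy with h | h
    · have h2 : m = dx := min_eq_left h
      linarith only [h1, h2, hd0]
    · have h2 : m = dy := min_eq_right h
      linarith only [h1, h2, hd0]
  have hdym : dy ≤ m + d := by
    have h1 : dy ≤ dx + d := by
      rw [hdydef, hdxdef, hddef, dist_comm]
      exact infDist_le_infDist_add_dist
    rcases le_total dx dy with h | h
    · have h2 : m = dx := min_eq_left h
      linarith only [h1, h2, hd0]
    · have h2 : m = dy := min_eq_right h
      linarith only [h1, h2, hd0]
  obtain ⟨γ, hγ0, hγd, hγlip⟩ := hgeo x y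
  rw [← hddef] at hγd hγlip
  set z : ℕ → X := fun i => γ ((i : ℝ) * (d / N)) with hzdef
  have hdN0 : 0 < d / N := div_pos hd hN0
  have hmemIcc : ∀ i : ℕ, i ≤ N → ((i:ℝ) * (d / N)) ∈ Set.Icc (0:ℝ) d := by
    intro i hi
    constructor
    · exact mul_nonneg (Nat.cast_nonneg i) hdN0.le
    · have hiR : (i:ℝ) ≤ N := by exact_mod_cast hi
      calc (i:ℝ) * (d / N) ≤ (N:ℝ) * (d / N) :=
          mul_le_mul_of_nonneg_right hiR hdN0.le
        _ = d := by field_simp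
  have hz0 : z 0 = x := by
    have h1 : z 0 = γ (((0:ℕ):ℝ) * (d / N)) := rfl
    rw [h1, Nat.cast_zero, zero_mul]
    exact hγ0
  have hzN : z N = y := by
    have h1 : z N = γ ((N:ℝ) * (d / N)) := rfl
    have h2 : (N:ℝ) * (d / N) = d := by field_simp
    rw [h1, h2, hγd]
  have hzdist : ∀ i j : ℕ, i ≤ N → j ≤ N →
      dist (z i) (z j) ≤ |(i:ℝ) - (j:ℝ)| * (d / N) := by
    intro i j hi hj
    have h1 := hγlip.dist_le_mul _ (hmemIcc i hi) _ (hmemIcc j hj)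
    have h2 : z i = γ ((i:ℝ) * (d / N)) := rfl
    have h3 : z j = γ ((j:ℝ) * (d / N)) := rfl
    rw [h2, h3]
    calc dist (γ ((i:ℝ) * (d / N))) (γ ((j:ℝ) * (d / N)))
        ≤ (1:ℝ≥0) * dist ((i:ℝ) * (d / N)) ((j:ℝ) * (d / N)) := h1
      _ = |(i:ℝ) - (j:ℝ)| * (d / N) := by
          rw [NNReal.coe_one, one_mul, Real.dist_eq, ← sub_mul, abs_mul,
            abs_of_nonneg hdN0.le]
  set P : ℕ → X := fun i => if 2 * i ≤ N then x else y with hPdef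
  have hPanch : ∀ i : ℕ, i ≤ N → dist (z i) (P i) ≤ d / 2 := by
    intro i hi
    by_cases h2i : 2 * i ≤ N
    · have hPi : P i = x := by
        have : P i = if 2 * i ≤ N then x else y := rfl
        rw [this, if_pos h2i]
      rw [hPi]
      have h1 : (i:ℝ) ≤ (N:ℝ) / 2 := by
        have h2 : ((2 * i : ℕ):ℝ) ≤ ((N:ℕ):ℝ) := by exact_mod_cast h2i
        push_cast at h2
        linarith
      calc dist (z i) x = dist (z i) (z 0) := by rw [hz0]
        _ ≤ |(i:ℝ) - ((0:ℕ):ℝ)| * (d / N) := hzdist i 0 hi (by omega)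
        _ = (i:ℝ) * (d / N) := by
            rw [Nat.cast_zero, sub_zero, abs_of_nonneg (Nat.cast_nonneg i)]
        _ ≤ ((N:ℝ) / 2) * (d / N) := mul_le_mul_of_nonneg_right h1 hdN0.le
        _ = d / 2 := by field_simp
    · have hPi : P i = y := by
        have : P i = if 2 * i ≤ N then x else y := rfl
        rw [this, if_neg h2i]
      rw [hPi]
      push_neg at h2i
      have h1 : (N:ℝ) - (i:ℝ) ≤ (N:ℝ) / 2 := by
        have h2 : ((N:ℕ):ℝ) ≤ ((2 * i : ℕ):ℝ) := by exact_mod_cast h2i.le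
        push_cast at h2
        linarith
      have hiR : (i:ℝ) ≤ (N:ℝ) := by exact_mod_cast hi
      calc dist (z i) y = dist (z i) (z N) := by rw [hzN]
        _ ≤ |(i:ℝ) - ((N:ℕ):ℝ)| * (d / N) := hzdist i N hi le_rfl
        _ = ((N:ℝ) - (i:ℝ)) * (d / N) := by
            rw [abs_sub_comm, abs_of_nonneg (sub_nonneg.2 hiR)]
        _ ≤ ((N:ℝ) / 2) * (d / N) := mul_le_mul_of_nonneg_right h1 hdN0.le
        _ = d / 2 := by field_simp
  have hPm : ∀ i : ℕ, m ≤ infDist (P i) Ωᶜ ∧ infDist (P i) Ωᶜ ≤ m + d := by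
    intro i
    by_cases h2i : 2 * i ≤ N
    · have hPi : P i = x := by
        have : P i = if 2 * i ≤ N then x else y := rfl
        rw [this, if_pos h2i]
      rw [hPi]; exact ⟨hmdx, hdxm⟩
    · have hPi : P i = y := by
        have : P i = if 2 * i ≤ N then x else y := rfl
        rw [this, if_neg h2i]
      rw [hPi]; exact ⟨hmdy, hdym⟩
  have hzinf : ∀ i : ℕ, i ≤ N → m - d / 2 ≤ infDist (z i) Ωᶜ := by
    intro i hi
    have h1 : infDist (P i) Ωᶜ ≤ infDist (z i) Ωᶜ + dist (P i) (z i) :=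
      infDist_le_infDist_add_dist
    have h2 := hPanch i hi
    rw [dist_comm] at h2
    have h3 := (hPm i).1
    linarith only [h1, h2, h3]
  set r : ℝ := d / (2 * N) with hrdef
  have hr0 : 0 < r := by
    rw [hrdef]
    exact div_pos hd (by linarith)
  have hrd4 : r ≤ d / 4 := by
    rw [hrdef, div_le_div_iff₀ (by linarith) (by norm_num)]
    linarith only [mul_le_mul_of_nonneg_left hN2R hd0]
  have hballΩ : ∀ i : ℕ, i ≤ N → ∀ w : X, dist w (z i) ≤ r →
      w ∈ Ω ∧ (1 - cb) * m ≤ infDist w Ωᶜ := by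
    intro i hi w hw
    have h1 : infDist (z i) Ωᶜ ≤ infDist w Ωᶜ + dist (z i) w :=
      infDist_le_infDist_add_dist
    rw [dist_comm] at h1
    have h2 := hzinf i hi
    have h3 : (1 - cb) * m ≤ infDist w Ωᶜ := by
      linarith only [h1, h2, hw, hdcb, hrd4, mul_nonneg hcb0.le hm0.le]
    have hpos : 0 < (1 - cb) * m := mul_pos (by linarith only [hcb1]) hm0
    have h4 : 0 < infDist w Ωᶜ := by linarith only [h3, hpos]
    refine ⟨?_, h3⟩
    by_contra hwΩ
    have h5 : w ∈ Ωᶜ := hwΩ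
    rw [infDist_zero_of_mem h5] at h4
    exact lt_irrefl 0 h4
  set Ck : ℝ≥0∞ := (ENNReal.ofReal C_d) ^ k with hCkdef
  have hCkne : Ck ≠ ⊤ := ENNReal.pow_ne_top hofCd_ne
  have hCk0 : Ck ≠ 0 := pow_ne_zero _ (fun h => by simp [h] at hofCd1)
  set E : Set X := {w | Ω.indicator g w ≠ g₀ w} with hEdef
  have hE0 : μ E = 0 := ae_iff.1 hae
  have hsel : ∀ i : ℕ, 0 < i → i < N → ∃ w : X, w ∈ Ω ∧ w ∉ A ∧ dist w (z i) ≤ r ∧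
      g w ≤ 2 * C_d ^ k * (H' x + H' y) := by
    intro i hi0 hiN
    have hiN' : i ≤ N := hiN.le
    set B : Set X := ball (z i) r with hBdef
    have hμB0 : μ B ≠ 0 := (hD (z i) r hr0).1.ne'
    have hμBne : μ B ≠ ⊤ := (hD (z i) r hr0).2.2.ne
    set a : ℝ≥0∞ := ∫⁻ w in B, G w ∂μ with hadef
    have hane : a ≠ ⊤ := ((setLIntegral_le_lintegral _ _).trans_lt hIfin).ne
    have hsub1 : B ⊆ ball (P i) (ρ (P i)) := by
      intro w hw
      have hw' : dist w (z i) < r := by rwa [hBdef, mem_ball] at hw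
      rw [mem_ball]
      have h1 : dist w (P i) ≤ dist w (z i) + dist (z i) (P i) := dist_triangle _ _ _
      have h2 := hPanch i hiN'
      have h5 : 3 / 4 * d ≤ ρ (P i) := by
        have hρP : ρ (P i) = β * infDist (P i) Ωᶜ := rfl
        rw [hρP, hβdef]
        have h6 := (hPm i).1
        linarith only [hdcb, mul_le_mul_of_nonneg_left h6 hcb0.le]
      linarith only [h1, hw', h2, h5, hrd4]
    have ha_le : a ≤ NumF (P i) := by
      have h0 : NumF (P i) = ∫⁻ w in ball (P i) (ρ (P i)), G w ∂μ := rfl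
      rw [hadef, h0]
      exact lintegral_mono_set hsub1
    have hsub2 : ball (P i) (ρ (P i)) ⊆ ball (z i) (2 ^ k * r) := by
      intro w hw
      rw [mem_ball] at hw ⊢
      have h1 : dist w (z i) ≤ dist w (P i) + dist (P i) (z i) := dist_triangle _ _ _
      have h2 := hPanch i hiN'
      rw [dist_comm] at h2
      have h4 : ρ (P i) + d / 2 ≤ 2 ^ k * r := by
        have hρP : ρ (P i) = β * infDist (P i) Ωᶜ := rfl
        have h5 : ρ (P i) ≤ β * (m + d) := by
          rw [hρP]
          exact mul_le_mul_of_nonneg_left (hPm i).2 hβ0.le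
        have t0 : cb * m ≤ m := by
          calc cb * m ≤ 1 * m := mul_le_mul_of_nonneg_right hcb1.le hm0.le
            _ = m := one_mul m
        have h6 : d ≤ m := hdcb.trans t0
        have h7 : ρ (P i) + d / 2 ≤ 2 * m := by
          rw [hβdef] at h5
          have t2 : cb * (m + d) ≤ 1 * (m + d) :=
            mul_le_mul_of_nonneg_right hcb1.le (by linarith only [hd0, hm0.le])
          linarith only [h5, h6, hm0.le, t2]
        have h8 : 2 * m ≤ 2 ^ k * r := by
          rw [hrdef, ← mul_div_assoc, le_div_iff₀ (by linarith : (0:ℝ) < 2 * N)]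
          have h9 : 4 * (N:ℝ) * m ≤ 2 ^ k * ca * m :=
            mul_le_mul_of_nonneg_right hpow2 hm0.le
          have h10 : 2 ^ k * (ca * m) ≤ 2 ^ k * d :=
            mul_le_mul_of_nonneg_left hEasy.le (by positivity)
          linarith only [h9, h10]
        linarith only [h7, h8]
      linarith only [h1, h2, hw, h4]
    have hDp_le : D (P i) ≤ Ck * μ B := by
      have h0 : D (P i) = μ (ball (P i) (ρ (P i))) := rfl
      calc D (P i) = μ (ball (P i) (ρ (P i))) := h0
        _ ≤ μ (ball (z i) (2 ^ k * r)) := measure_mono hsub2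
        _ ≤ Ck * μ B := by
            rw [hCkdef, hBdef]
            exact doubling_iter hD k (z i) r hr0
    set M : ℝ≥0∞ := a / μ B with hMdef
    have hMne : M ≠ ⊤ := by
      rw [hMdef]
      intro h
      rw [ENNReal.div_eq_top] at h
      rcases h with ⟨_, h⟩ | ⟨h, _⟩
      · exact hμB0 h
      · exact hane h
    have hM_le : M ≤ Ck * H (P i) := by
      have h1 : (μ B)⁻¹ ≤ Ck * (D (P i))⁻¹ := by
        have h2 : D (P i) / Ck ≤ μ B :=
          ENNReal.div_le_of_le_mul (by rw [mul_comm]; exact hDp_le)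
        calc (μ B)⁻¹ ≤ (D (P i) / Ck)⁻¹ := ENNReal.inv_le_inv.2 h2
          _ = Ck / D (P i) := ENNReal.inv_div (Or.inl hCkne) (Or.inl hCk0)
          _ = Ck * (D (P i))⁻¹ := div_eq_mul_inv _ _
      have h3 : H (P i) = NumF (P i) / D (P i) := rfl
      calc M = a * (μ B)⁻¹ := by rw [hMdef, div_eq_mul_inv]
        _ ≤ NumF (P i) * (Ck * (D (P i))⁻¹) := mul_le_mul' ha_le h1
        _ = Ck * (NumF (P i) * (D (P i))⁻¹) := by ring
        _ = Ck * H (P i) := by rw [h3, div_eq_mul_inv]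
    have hnon : (B \ ({w | 2 * M < G w} ∪ (A ∪ E))).Nonempty := by
      by_contra hempty
      rw [Set.not_nonempty_iff_eq_empty, Set.diff_eq_empty] at hempty
      have hBsub : μ B ≤ μ (B ∩ {w | 2 * M < G w}) + (μ A + μ E) := by
        calc μ B ≤ μ ((B ∩ {w | 2 * M < G w}) ∪ (A ∪ E)) := by
              apply measure_mono
              intro w hw
              rcases hempty hw with h | h
              · exact Or.inl ⟨hw, h⟩
              · exact Or.inr h
          _ ≤ μ (B ∩ {w | 2 * M < G w}) + μ (A ∪ E) := measure_union_le _ _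
          _ ≤ μ (B ∩ {w | 2 * M < G w}) + (μ A + μ E) :=
              add_le_add_right (measure_union_le _ _) _
      rw [hA0, hE0] at hBsub
      simp only [add_zero] at hBsub
      have hBadMeas : MeasurableSet {w | 2 * M < G w} :=
        measurableSet_lt measurable_const hGm
      by_cases ha0 : a = 0
      · have hG0 : ∀ᵐ w ∂(μ.restrict B), G w = 0 :=
          (lintegral_eq_zero_iff' hGm.aemeasurable.restrict).1 (by rw [← hadef]; exact ha0)
        have hM0 : M = 0 := by rw [hMdef, ha0, ENNReal.zero_div]
        have hBad0 : (μ.restrict B) {w | 2 * M < G w} = 0 := by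
          have h5 : (μ.restrict B) {w | ¬ (G w = 0)} = 0 := ae_iff.1 hG0
          refine le_antisymm (le_trans (measure_mono ?_) (le_of_eq h5)) zero_le
          intro w hw
          simp only [Set.mem_setOf_eq] at hw ⊢
          rw [hM0] at hw
          simpa using (lt_of_le_of_lt zero_le hw).ne'
        have h6 : μ (B ∩ {w | 2 * M < G w}) = 0 := by
          rw [Set.inter_comm, ← Measure.restrict_apply hBadMeas]
          exact hBad0
        rw [h6] at hBsub
        exact hμB0 (le_antisymm hBsub zero_le)
      · have hM0 : M ≠ 0 := by
          rw [hMdef]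
          simp only [ne_eq, ENNReal.div_eq_zero_iff, not_or]
          exact ⟨ha0, hμBne⟩
        have hMark : 2 * M * (μ.restrict B) {w | 2 * M ≤ G w} ≤ a := by
          have h7 := mul_meas_ge_le_lintegral₀
            (μ := μ.restrict B) (hGm.aemeasurable) (2 * M)
          rw [← hadef] at h7
          exact h7
        have haM : a = M * μ B := by
          rw [hMdef, ENNReal.div_mul_cancel hμB0 hμBne]
        have hhalf : (μ.restrict B) {w | 2 * M ≤ G w} ≤ μ B / 2 := by
          rw [ENNReal.le_div_iff_mul_le (Or.inl two_ne_zero) (Or.inl ENNReal.ofNat_ne_top)]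
          have h7 : ((μ.restrict B) {w | 2 * M ≤ G w} * 2) * M ≤ (μ B) * M := by
            calc ((μ.restrict B) {w | 2 * M ≤ G w} * 2) * M
                = 2 * M * (μ.restrict B) {w | 2 * M ≤ G w} := by ring
              _ ≤ a := hMark
              _ = M * μ B := haM
              _ = (μ B) * M := mul_comm _ _
          exact (ENNReal.mul_le_mul_iff_left hM0 hMne).1 h7
        have hBad_le : μ (B ∩ {w | 2 * M < G w}) ≤ μ B / 2 := by
          rw [Set.inter_comm, ← Measure.restrict_apply hBadMeas]
          have hss : {w | 2 * M < G w} ⊆ {w | 2 * M ≤ G w} := by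
            intro w hw
            simp only [Set.mem_setOf_eq] at hw ⊢
            exact le_of_lt hw
          calc (μ.restrict B) {w | 2 * M < G w} ≤ (μ.restrict B) {w | 2 * M ≤ G w} :=
              measure_mono hss
            _ ≤ μ B / 2 := hhalf
        have hcontra : μ B ≤ μ B / 2 := le_trans hBsub hBad_le
        exact absurd (lt_of_le_of_lt hcontra (ENNReal.half_lt_self hμB0 hμBne))
          (lt_irrefl _)
    obtain ⟨w, hwB, hwn⟩ := hnon
    simp only [Set.mem_union, not_or] at hwn
    obtain ⟨hwBad, hwA, hwE⟩ := hwn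
    have hwdist : dist w (z i) ≤ r := by
      rw [hBdef, mem_ball] at hwB
      exact hwB.le
    have hwΩ : w ∈ Ω := (hballΩ i hiN' w hwdist).1
    have hgw : ENNReal.ofReal (g w) = G w := by
      have h1 : Ω.indicator g w = g₀ w := by
        by_contra h
        exact hwE h
      have h2 : G w = ENNReal.ofReal (g₀ w) := rfl
      rw [h2, ← h1, Set.indicator_of_mem hwΩ]
    have hGw : G w ≤ 2 * (Ck * H (P i)) := by
      have h1 : G w ≤ 2 * M := not_lt.1 hwBad
      calc G w ≤ 2 * M := h1
        _ ≤ 2 * (Ck * H (P i)) := mul_le_mul_right hM_le _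
    have hfin : 2 * (Ck * H (P i)) ≠ ⊤ := by
      apply ENNReal.mul_ne_top (by simp)
      exact ENNReal.mul_ne_top hCkne (hH_lt (P i)).ne
    have hgwle : g w ≤ 2 * C_d ^ k * H' (P i) := by
      have h1 : g w = (ENNReal.ofReal (g w)).toReal := (ENNReal.toReal_ofReal (hg0 w)).symm
      have h2 : H' (P i) = (H (P i)).toReal := rfl
      rw [h1, hgw, h2]
      calc (G w).toReal ≤ (2 * (Ck * H (P i))).toReal := ENNReal.toReal_mono hfin hGw
        _ = 2 * C_d ^ k * (H (P i)).toReal := by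
            rw [ENNReal.toReal_mul, ENNReal.toReal_mul, hCkdef, ENNReal.toReal_pow,
              ENNReal.toReal_ofReal hCd0.le, ENNReal.toReal_ofNat]
            ring
    have hple : H' (P i) ≤ H' x + H' y := by
      by_cases h2i : 2 * i ≤ N
      · have hPi : P i = x := by
          have : P i = if 2 * i ≤ N then x else y := rfl
          rw [this, if_pos h2i]
        rw [hPi]
        linarith [hH'0 y]
      · have hPi : P i = y := by
          have : P i = if 2 * i ≤ N then x else y := rfl
          rw [this, if_neg h2i]
        rw [hPi]
        linarith [hH'0 x]
    refine ⟨w, hwΩ, hwA, hwdist, ?_⟩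
    calc g w ≤ 2 * C_d ^ k * H' (P i) := hgwle
      _ ≤ 2 * C_d ^ k * (H' x + H' y) :=
          mul_le_mul_of_nonneg_left hple (by positivity)
  set W : ℕ → X := fun i => if h : 0 < i ∧ i < N then (hsel i h.1 h.2).choose
    else if i = 0 then x else y with hWdef
  have hW0 : W 0 = x := by
    have h1 : W 0 = if h : 0 < 0 ∧ 0 < N then (hsel 0 h.1 h.2).choose
      else if 0 = 0 then x else y := rfl
    rw [h1, dif_neg (by omega), if_pos rfl]
  have hWN : W N = y := by
    have h1 : W N = if h : 0 < N ∧ N < N then (hsel N h.1 h.2).choose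
      else if N = 0 then x else y := rfl
    rw [h1, dif_neg (by omega), if_neg (by omega)]
  have hWmid : ∀ i : ℕ, ∀ (h1 : 0 < i) (h2 : i < N), W i ∈ Ω ∧ W i ∉ A ∧
      dist (W i) (z i) ≤ r ∧ g (W i) ≤ 2 * C_d ^ k * (H' x + H' y) := by
    intro i h1 h2
    have h3 : W i = (hsel i h1 h2).choose := by
      have h4 : W i = if h : 0 < i ∧ i < N then (hsel i h.1 h.2).choose
        else if i = 0 then x else y := rfl
      rw [h4, dif_pos ⟨h1, h2⟩]
    rw [h3]
    exact (hsel i h1 h2).choose_spec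
  have hWmem : ∀ i : ℕ, i ≤ N → (W i ∈ Ω ∧ W i ∉ A) ∧ dist (W i) (z i) ≤ r := by
    intro i hi
    rcases Nat.eq_zero_or_pos i with h0 | h0
    · subst h0
      rw [hW0, hz0]
      exact ⟨⟨hx.1, hx.2⟩, by simp [hr0.le]⟩
    rcases eq_or_lt_of_le hi with hN' | hN'
    · subst hN'
      rw [hWN, hzN]
      exact ⟨⟨hy.1, hy.2⟩, by simp [hr0.le]⟩
    · obtain ⟨ha, hb, hc, _⟩ := hWmid i h0 hN'
      exact ⟨⟨ha, hb⟩, hc⟩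
  have hWg : ∀ i : ℕ, i ≤ N →
      g (W i) ≤ g x + g y + 2 * C_d ^ k * (H' x + H' y) := by
    intro i hi
    have hK0 : (0:ℝ) ≤ 2 * C_d ^ k * (H' x + H' y) := by
      have h1 := hH'0 x
      have h2 := hH'0 y
      positivity
    rcases Nat.eq_zero_or_pos i with h0 | h0
    · subst h0
      rw [hW0]
      linarith only [hg0 y, hK0]
    rcases eq_or_lt_of_le hi with hN' | hN'
    · subst hN'
      rw [hWN]
      linarith only [hg0 x, hK0]
    · have h5 := (hWmid i h0 hN').2.2.2
      linarith only [h5, hg0 x, hg0 y]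
  have h2dN : (0:ℝ) ≤ 2 * (d / N) := by positivity
  have hstep : ∀ i : ℕ, i < N →
      |u (W i) - u (W (i+1))| ≤ (2 * (d / N)) * (g (W i) + g (W (i+1))) := by
    intro i hi
    have hi' : i ≤ N := hi.le
    have hi1 : i + 1 ≤ N := hi
    have hd1 : dist (W i) (W (i+1)) ≤ 2 * (d / N) := by
      have h1 : dist (W i) (W (i+1)) ≤
          dist (W i) (z i) + dist (z i) (z (i+1)) + dist (z (i+1)) (W (i+1)) :=
        dist_triangle4 _ _ _ _
      have h2 := (hWmem i hi').2
      have h3 := (hWmem (i+1) hi1).2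
      rw [dist_comm] at h3
      have h4 : dist (z i) (z (i+1)) ≤ d / N := by
        have h5 := hzdist i (i+1) hi' hi1
        have h6 : |(i:ℝ) - ((i+1:ℕ):ℝ)| = 1 := by
          push_cast
          rw [abs_sub_comm]
          norm_num
        rw [h6, one_mul] at h5
        exact h5
      have h6 : r + d / N + r = 2 * (d / N) := by
        rw [hrdef]
        field_simp
        ring
      linarith only [h1, h2, h3, h4, h6]
    have hinf1 := (hballΩ i hi' (W i) (hWmem i hi').2).2
    have hinf2 := (hballΩ (i+1) hi1 (W (i+1)) (hWmem (i+1) hi1).2).2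
    have hcond : dist (W i) (W (i+1)) ≤
        ca * min (infDist (W i) Ωᶜ) (infDist (W (i+1)) Ωᶜ) := by
      have h7 : (1 - cb) * m ≤ min (infDist (W i) Ωᶜ) (infDist (W (i+1)) Ωᶜ) :=
        le_min hinf1 hinf2
      have h9 : 2 ≤ (N:ℝ) * (ca * (1 - cb)) := by
        rw [div_le_iff₀ (mul_pos hca0 (by linarith only [hcb1]))] at hNge
        linarith only [hNge]
      have t0 : cb * m ≤ m := by
        calc cb * m ≤ 1 * m := mul_le_mul_of_nonneg_right hcb1.le hm0.le
          _ = m := one_mul m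
      have t1 : d ≤ m := hdcb.trans t0
      have h8 : 2 * (d / N) ≤ ca * ((1 - cb) * m) := by
        rw [← mul_div_assoc, div_le_iff₀ hN0]
        have t2 : 2 * m ≤ ((N:ℝ) * (ca * (1 - cb))) * m :=
          mul_le_mul_of_nonneg_right h9 hm0.le
        linarith only [t1, t2]
      calc dist (W i) (W (i+1)) ≤ 2 * (d / N) := hd1
        _ ≤ ca * ((1 - cb) * m) := h8
        _ ≤ ca * min (infDist (W i) Ωᶜ) (infDist (W (i+1)) Ωᶜ) :=
            mul_le_mul_of_nonneg_left h7 hca0.le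
    have hmem1 : W i ∈ Ω \ A := ⟨(hWmem i hi').1.1, (hWmem i hi').1.2⟩
    have hmem2 : W (i+1) ∈ Ω \ A := ⟨(hWmem (i+1) hi1).1.1, (hWmem (i+1) hi1).1.2⟩
    have h10 := hHaj (W i) hmem1 (W (i+1)) hmem2 hcond
    have hgnn : 0 ≤ g (W i) + g (W (i+1)) := by
      linarith only [hg0 (W i), hg0 (W (i+1))]
    calc |u (W i) - u (W (i+1))| ≤ dist (W i) (W (i+1)) * (g (W i) + g (W (i+1))) := h10
      _ ≤ (2 * (d / N)) * (g (W i) + g (W (i+1))) :=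
          mul_le_mul_of_nonneg_right hd1 hgnn
  set K2 : ℝ := g x + g y + 2 * C_d ^ k * (H' x + H' y) with hK2def
  have htel : |u x - u y| ≤ (N:ℝ) * ((2 * (d / N)) * (2 * K2)) := by
    have h1 : |u x - u y| = dist (u (W 0)) (u (W N)) := by
      rw [hW0, hWN, Real.dist_eq]
    rw [h1]
    calc dist (u (W 0)) (u (W N))
        ≤ ∑ i ∈ Finset.range N, dist (u (W i)) (u (W (i+1))) :=
          dist_le_range_sum_dist (fun i => u (W i)) N
      _ ≤ ∑ _i ∈ Finset.range N, (2 * (d / N)) * (2 * K2) := by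
          apply Finset.sum_le_sum
          intro i hi
          rw [Finset.mem_range] at hi
          have h2 : dist (u (W i)) (u (W (i+1))) = |u (W i) - u (W (i+1))| :=
            Real.dist_eq _ _
          rw [h2]
          have h3 := hstep i hi
          have h4 : g (W i) + g (W (i+1)) ≤ 2 * K2 := by
            have h5 := hWg i hi.le
            have h6 := hWg (i+1) hi
            linarith only [h5, h6]
          calc |u (W i) - u (W (i+1))| ≤ (2 * (d / N)) * (g (W i) + g (W (i+1))) := h3
            _ ≤ (2 * (d / N)) * (2 * K2) := mul_le_mul_of_nonneg_left h4 h2dN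
      _ = (N:ℝ) * ((2 * (d / N)) * (2 * K2)) := by
          rw [Finset.sum_const, Finset.card_range, nsmul_eq_mul]
  have hfinal : (N:ℝ) * ((2 * (d / N)) * (2 * K2)) = 4 * d * K2 := by
    field_simp
    ring
  have hgoal : 4 * d * K2 = d * (g' x + g' y) := by
    have e1 : g' x = 4 * g x + 8 * C_d ^ k * H' x := rfl
    have e2 : g' y = 4 * g y + 8 * C_d ^ k * H' y := rfl
    rw [hK2def, e1, e2]
    ring
  calc |u x - u y| ≤ (N:ℝ) * ((2 * (d / N)) * (2 * K2)) := htel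
    _ = 4 * d * K2 := hfinal
    _ = d * (g' x + g' y) := hgoal

/-- If `X` is a complete geodesic metric space (every pair of points
is joined by a curve of length equal to their distance) with a doubling measure of
constant `C_d`, and `Ω ⊆ X` is a nonempty open set with nonempty complement, then for
any `0 < c₁, c₂ < 1` one has `M^{1,1}_{c₁}(Ω) = M^{1,1}_{c₂}(Ω)` with equivalent norms,
the equivalence constants depending only on `C_d, c₁, c₂`. -/
theorem hajlaszLoc_indep_of_constant (C_d c₁ c₂ : ℝ) (hCd : 1 ≤ C_d)
    (hc₁ : c₁ ∈ Set.Ioo (0 : ℝ) 1) (hc₂ : c₂ ∈ Set.Ioo (0 : ℝ) 1) :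
    ∃ C ≥ (1 : ℝ), ∀ (X : Type) [MetricSpace X] [CompleteSpace X] [MeasurableSpace X]
      [BorelSpace X] (μ : Measure X),
      (∀ (x : X) (r : ℝ), 0 < r →
        0 < μ (ball x r) ∧ μ (ball x (2 * r)) ≤ ENNReal.ofReal C_d * μ (ball x r) ∧
          μ (ball x r) < ⊤) →
      (∀ x y : X, ∃ γ : ℝ → X, γ 0 = x ∧ γ (dist x y) = y ∧
        LipschitzOnWith 1 γ (Set.Icc (0 : ℝ) (dist x y))) →
      ∀ (Ω : Set X), IsOpen Ω → Ω.Nonempty → Ωᶜ.Nonempty →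
      ∀ u : X → ℝ, IntegrableOn u Ω μ →
        ((∀ g : X → ℝ, HajlaszAdmissibleLoc μ Ω c₁ u g →
          ∃ g' : X → ℝ, HajlaszAdmissibleLoc μ Ω c₂ u g' ∧
            ∫ p in Ω, |u p| ∂μ + ∫ p in Ω, g' p ∂μ ≤
              C * (∫ p in Ω, |u p| ∂μ + ∫ p in Ω, g p ∂μ)) ∧
        (∀ g : X → ℝ, HajlaszAdmissibleLoc μ Ω c₂ u g →
          ∃ g' : X → ℝ, HajlaszAdmissibleLoc μ Ω c₁ u g' ∧
            ∫ p in Ω, |u p| ∂μ + ∫ p in Ω, g' p ∂μ ≤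
              C * (∫ p in Ω, |u p| ∂μ + ∫ p in Ω, g p ∂μ))) := by
  obtain ⟨C1, hC1, h1⟩ := hajlasz_key C_d c₁ c₂ hCd hc₁ hc₂
  obtain ⟨C2, hC2, h2⟩ := hajlasz_key C_d c₂ c₁ hCd hc₂ hc₁
  refine ⟨max C1 C2, le_trans hC1 (le_max_left _ _), ?_⟩
  intro X _ _ _ _ μ hD hgeo Ω hΩ hne hcne u hu
  have hCmax : (1:ℝ) ≤ max C1 C2 := le_trans hC1 (le_max_left _ _)
  have hu0 : 0 ≤ ∫ p in Ω, |u p| ∂μ := integral_nonneg fun p => abs_nonneg _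
  constructor
  · intro g hg
    obtain ⟨g', hg', hnorm⟩ := h1 X μ hD hgeo Ω hΩ hne hcne u g hg
    refine ⟨g', hg', ?_⟩
    have hg0 : 0 ≤ ∫ p in Ω, g p ∂μ := integral_nonneg fun p => hg.1 p
    have ha : C1 * ∫ p in Ω, g p ∂μ ≤ (max C1 C2) * ∫ p in Ω, g p ∂μ :=
      mul_le_mul_of_nonneg_right (le_max_left _ _) hg0
    have hb : ∫ p in Ω, |u p| ∂μ ≤ (max C1 C2) * ∫ p in Ω, |u p| ∂μ :=
      le_mul_of_one_le_left hu0 hCmax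
    nlinarith [hnorm]
  · intro g hg
    obtain ⟨g', hg', hnorm⟩ := h2 X μ hD hgeo Ω hΩ hne hcne u g hg
    refine ⟨g', hg', ?_⟩
    have hg0 : 0 ≤ ∫ p in Ω, g p ∂μ := integral_nonneg fun p => hg.1 p
    have ha : C2 * ∫ p in Ω, g p ∂μ ≤ (max C1 C2) * ∫ p in Ω, g p ∂μ :=
      mul_le_mul_of_nonneg_right (le_max_right _ _) hg0
    have hb : ∫ p in Ω, |u p| ∂μ ≤ (max C1 C2) * ∫ p in Ω, |u p| ∂μ :=
      le_mul_of_one_le_left hu0 hCmax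
    nlinarith [hnorm]
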